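/- Let S be the three-element semigroup P = {e, a, 0} with relations e² = e, e·a = a, a·e = 0, a² = 0 (and 0 absorbing). If a nontrivial unary-semigroup identity x₁⋯xₙ = w holds in P (with P as an epigroup under pseudoinversion, where ē = e and ā = 0), then n > 1 and w = w′·xₙ for some word w′ whose set of letters is exactly {x₁,…,x_{n−1}}. -/

import Mathlib

/-- The three-element semigroup `P = ⟨a, e ∣ e² = e, ea = a, ae = 0⟩ = {e, a, 0}`. -/
inductive PSem : Type
  | e : PSem
  | a : PSem
  | z : PSem
deriving DecidableEq

instance : Fintype PSem := ⟨{PSem.e, PSem.a, PSem.z}, by intro x; cases x <;> decide⟩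

/-- Multiplication of `P`: `e·e = e`, `e·a = a`, and all other products are `0`. -/
def PSem.mul : PSem → PSem → PSem
  | .e, .e => .e
  | .e, .a => .a
  | _, _ => .z

instance : Mul PSem := ⟨PSem.mul⟩

instance : Semigroup PSem where
  mul_assoc := by decide

/-- The pseudoinversion of the (finite, hence epi-) semigroup `P`:
`ē = e`, `ā = 0`, `0̄ = 0`. -/
def PSem.pinv : PSem → PSem
  | .e => .e
  | _ => .z

/-- Unary words: terms in the signature of one binary and one unary operation,
with letters indexed by natural numbers. -/
inductive UWord : Type
  | letter : ℕ → UWord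
  | mul : UWord → UWord → UWord
  | pinv : UWord → UWord

/-- Value of a unary word in `P` under an assignment of letters. -/
def UWord.eval (φ : ℕ → PSem) : UWord → PSem
  | .letter i => φ i
  | .mul u v => u.eval φ * v.eval φ
  | .pinv u => PSem.pinv (u.eval φ)

/-- The set of letters occurring in a unary word. -/
def UWord.letters : UWord → Set ℕ
  | .letter i => {i}
  | .mul u v => u.letters ∪ v.letters
  | .pinv u => u.letters

/-- `chainW k` is the word `x₀ x₁ ⋯ x_k`. -/
def chainW : ℕ → UWord
  | 0 => .letter 0
  | k + 1 => .mul (chainW k) (.letter (k + 1))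

/-- Equality of unary words in the free unary semigroup, i.e. the congruence
generated by associativity of the binary operation. -/
inductive AEq : UWord → UWord → Prop
  | refl (u : UWord) : AEq u u
  | symm {u v : UWord} : AEq u v → AEq v u
  | trans {u v w : UWord} : AEq u v → AEq v w → AEq u w
  | assoc (u v w : UWord) : AEq ((u.mul v).mul w) (u.mul (v.mul w))
  | mul_congr {u u' v v' : UWord} : AEq u u' → AEq v v' → AEq (u.mul v) (u'.mul v')
  | pinv_congr {u u' : UWord} : AEq u u' → AEq u.pinv u'.pinv

/-! ### Auxiliary lemmas -/

lemma PSem.mul_ne_e_z : ∀ {x : PSem} (y : PSem), x ≠ PSem.e → x * y = PSem.z := by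
  decide

lemma PSem.mul_ne_e_right : ∀ (x : PSem) {y : PSem}, y ≠ PSem.e → x * y ≠ PSem.e := by
  decide

lemma PSem.pinv_ne_e : ∀ {x : PSem}, x ≠ PSem.e → PSem.pinv x ≠ PSem.e := by
  decide

lemma PSem.pinv_ne_a : ∀ (x : PSem), PSem.pinv x ≠ PSem.a := by
  decide

lemma PSem.eq_of_mul_eq_a : ∀ {x y : PSem}, x * y = PSem.a → x = PSem.e ∧ y = PSem.a := by
  decide

lemma UWord.eval_congr {u v : UWord} (h : AEq u v) (φ : ℕ → PSem) :
    u.eval φ = v.eval φ := by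
  induction h with
  | refl => rfl
  | symm _ ih => exact ih.symm
  | trans _ _ ih1 ih2 => exact ih1.trans ih2
  | assoc a b c => exact mul_assoc _ _ _
  | mul_congr _ _ ih1 ih2 => simp only [UWord.eval, ih1, ih2]
  | pinv_congr _ ih => simp only [UWord.eval, ih]

lemma UWord.letters_nonempty (u : UWord) : ∃ i, i ∈ u.letters := by
  induction u with
  | letter i => exact ⟨i, rfl⟩
  | mul u v ihu ihv =>
      obtain ⟨i, hi⟩ := ihu
      exact ⟨i, Set.mem_union_left _ hi⟩
  | pinv u ih => exact ih

lemma UWord.eval_ne_e {u : UWord} {φ : ℕ → PSem} {j : ℕ}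
    (hj : j ∈ u.letters) (h : φ j ≠ PSem.e) : u.eval φ ≠ PSem.e := by
  induction u with
  | letter i =>
      have : j = i := hj
      subst this; exact h
  | mul u v ihu ihv =>
      rcases hj with hj | hj
      · have := ihu hj
        show u.eval φ * v.eval φ ≠ PSem.e
        rw [PSem.mul_ne_e_z _ this]
        intro hc; exact PSem.noConfusion hc
      · exact PSem.mul_ne_e_right _ (ihv hj)
  | pinv u ih => exact PSem.pinv_ne_e (ih hj)

lemma UWord.eval_e {u : UWord} {φ : ℕ → PSem}
    (h : ∀ j ∈ u.letters, φ j = PSem.e) : u.eval φ = PSem.e := by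
  induction u with
  | letter i => exact h i rfl
  | mul u v ihu ihv =>
      have h1 := ihu (fun j hj => h j (Set.mem_union_left _ hj))
      have h2 := ihv (fun j hj => h j (Set.mem_union_right _ hj))
      show u.eval φ * v.eval φ = PSem.e
      rw [h1, h2]; rfl
  | pinv u ih =>
      have := ih h
      show PSem.pinv (u.eval φ) = PSem.e
      rw [this]; rfl

lemma mem_letters_chainW {k i : ℕ} : i ∈ (chainW k).letters ↔ i ≤ k := by
  induction k with
  | zero =>
      simp only [chainW, UWord.letters, Set.mem_singleton_iff, Nat.le_zero]
  | succ k ih =>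
      simp only [chainW, UWord.letters, Set.mem_union, ih, Set.mem_singleton_iff]
      omega

lemma chainW_eval_e {k : ℕ} {φ : ℕ → PSem} (h : ∀ i ≤ k, φ i = PSem.e) :
    (chainW k).eval φ = PSem.e :=
  UWord.eval_e (fun j hj => h j (mem_letters_chainW.mp hj))

lemma chainW_eval_last_a {k : ℕ} {φ : ℕ → PSem}
    (h : ∀ i < k, φ i = PSem.e) (ha : φ k = PSem.a) :
    (chainW k).eval φ = PSem.a := by
  cases k with
  | zero => exact ha
  | succ k =>
      have he : (chainW k).eval φ = PSem.e :=
        chainW_eval_e (fun i hi => h i (by omega))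
      show (chainW k).eval φ * φ (k + 1) = PSem.a
      rw [he, ha]; rfl

lemma chainW_eval_z {k j : ℕ} {φ : ℕ → PSem}
    (hj : j < k) (hja : φ j ≠ PSem.e) :
    (chainW k).eval φ = PSem.z := by
  obtain ⟨m, rfl⟩ : ∃ m, k = m + 1 := ⟨k - 1, by omega⟩
  have h1 : (chainW m).eval φ ≠ PSem.e :=
    UWord.eval_ne_e (mem_letters_chainW.mpr (by omega)) hja
  show (chainW m).eval φ * φ (m + 1) = PSem.z
  exact PSem.mul_ne_e_z _ h1

/-- The list of top-level factors of a unary word. -/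
def UWord.factors : UWord → List UWord
  | .letter i => [.letter i]
  | .mul u v => u.factors ++ v.factors
  | .pinv u => [.pinv u]

/-- Left-associated product of a list of words onto an accumulator. -/
def lprod (acc : UWord) (l : List UWord) : UWord := l.foldl UWord.mul acc

lemma lprod_append (acc : UWord) (l1 l2 : List UWord) :
    lprod acc (l1 ++ l2) = lprod (lprod acc l1) l2 :=
  List.foldl_append

lemma UWord.factors_ne_nil (u : UWord) : u.factors ≠ [] := by
  induction u with
  | letter i => simp [UWord.factors]
  | mul u v ihu ihv => simp [UWord.factors, ihu]
  | pinv u ih => simp [UWord.factors]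

lemma aeq_lprod_mul (v : UWord) : ∀ acc : UWord, AEq (acc.mul v) (lprod acc v.factors) := by
  induction v with
  | letter i => intro acc; exact AEq.refl _
  | pinv u ih => intro acc; exact AEq.refl _
  | mul u v ihu ihv =>
      intro acc
      have h1 : AEq ((acc.mul u).mul v) (acc.mul (u.mul v)) := AEq.assoc _ _ _
      have h2 : AEq ((acc.mul u).mul v) ((lprod acc u.factors).mul v) :=
        AEq.mul_congr (ihu acc) (AEq.refl v)
      have h3 := ihv (lprod acc u.factors)
      show AEq (acc.mul (u.mul v)) (lprod acc (u.factors ++ v.factors))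
      rw [lprod_append]
      exact AEq.trans (AEq.trans (AEq.symm h1) h2) h3

lemma aeq_factors (u : UWord) : ∀ h t, u.factors = h :: t → AEq u (lprod h t) := by
  induction u with
  | letter i =>
      intro h t he
      simp only [UWord.factors, List.cons.injEq] at he
      obtain ⟨rfl, rfl⟩ := he
      exact AEq.refl _
  | pinv u ih =>
      intro h t he
      simp only [UWord.factors, List.cons.injEq] at he
      obtain ⟨rfl, rfl⟩ := he
      exact AEq.refl _
  | mul u v ihu ihv =>
      intro h t he
      simp only [UWord.factors] at he
      obtain ⟨h1, t1, hu⟩ : ∃ h1 t1, u.factors = h1 :: t1 := by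
        cases hu : u.factors with
        | nil => exact absurd hu (UWord.factors_ne_nil u)
        | cons a b => exact ⟨a, b, rfl⟩
      rw [hu, List.cons_append, List.cons.injEq] at he
      obtain ⟨rfl, rfl⟩ := he
      have hA : AEq u (lprod h1 t1) := ihu _ _ hu
      have hB : AEq (u.mul v) ((lprod h1 t1).mul v) := AEq.mul_congr hA (AEq.refl v)
      have hC : AEq ((lprod h1 t1).mul v) (lprod (lprod h1 t1) v.factors) :=
        aeq_lprod_mul v _
      rw [lprod_append]
      exact AEq.trans hB hC

lemma factors_shape (u : UWord) :
    ∀ x ∈ u.factors, (∃ i, x = UWord.letter i) ∨ ∃ v, x = UWord.pinv v := by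
  induction u with
  | letter i =>
      intro x hx
      simp only [UWord.factors, List.mem_singleton] at hx
      exact Or.inl ⟨i, hx⟩
  | pinv u ih =>
      intro x hx
      simp only [UWord.factors, List.mem_singleton] at hx
      exact Or.inr ⟨u, hx⟩
  | mul u v ihu ihv =>
      intro x hx
      simp only [UWord.factors, List.mem_append] at hx
      rcases hx with h | h
      · exact ihu x h
      · exact ihv x h

/-- If a nontrivial identity `x₁ ⋯ xₙ = w` holds in the epigroup `P`, then
`n > 1` and (up to associativity) `w = w' · xₙ` where the set of letters of
`w'` is exactly `{x₁, …, x_{n-1}}`.  (Letters are 0-indexed: `xₖ` is the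
letter `k - 1`, and `x₁ ⋯ xₙ` is `chainW (n-1)`.) -/
theorem stmt15 (n : ℕ) (hn : 1 ≤ n) (w : UWord)
    (hholds : ∀ φ : ℕ → PSem, (chainW (n - 1)).eval φ = w.eval φ)
    (hnontrivial : ¬ AEq (chainW (n - 1)) w) :
    1 < n ∧ ∃ w' : UWord, AEq w (w'.mul (.letter (n - 1))) ∧
      w'.letters = {i : ℕ | i < n - 1} := by
  set m := n - 1 with hm
  -- the distinguished assignment detecting the last letter
  set φa : ℕ → PSem := fun i => if i = m then PSem.a else PSem.e with hφa
  have hφa_m : φa m = PSem.a := by simp [hφa]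
  have hφa_ne : ∀ i, i ≠ m → φa i = PSem.e := by intro i hi; simp [hφa, hi]
  have hLa : (chainW m).eval φa = PSem.a :=
    chainW_eval_last_a (fun i hi => hφa_ne i (by omega)) hφa_m
  -- decompose factors of w
  have hne := UWord.factors_ne_nil w
  obtain ⟨L', F, hdl⟩ : ∃ L' F, L' ++ [F] = w.factors :=
    ⟨_, _, List.dropLast_append_getLast hne⟩
  have hFmem : F ∈ w.factors := by
    rw [← hdl]; simp
  -- F is a letter or a pinv, and will be forced to be letter m
  cases L' with
  | nil =>
      -- w is a single factor
      have hwF : AEq w F := aeq_factors w F [] hdl.symm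
      have hFa : F.eval φa = PSem.a := by
        rw [← UWord.eval_congr hwF φa, ← hholds φa, hLa]
      have hFl : F = UWord.letter m := by
        rcases factors_shape w F hFmem with ⟨i, rfl⟩ | ⟨v, rfl⟩
        · by_cases hi : i = m
          · rw [hi]
          · exfalso
            have h0 : UWord.eval φa (UWord.letter i) = PSem.e := hφa_ne i hi
            rw [h0] at hFa
            exact PSem.noConfusion hFa
        · exact absurd (show PSem.pinv (UWord.eval φa v) = PSem.a from hFa)
            (PSem.pinv_ne_a _)
      by_cases h1 : n = 1
      · exfalso
        apply hnontrivial
        have : chainW (n - 1) = F := by rw [h1] at hm ⊢; rw [hFl, hm]; rfl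
        rw [this]
        exact AEq.symm hwF
      · -- n ≥ 2 : contradiction with assignment φb
        exfalso
        have hm1 : 1 ≤ m := by omega
        set φb : ℕ → PSem := fun i => if i = 0 then PSem.a else PSem.e with hφb
        have hLz : (chainW m).eval φb = PSem.z :=
          chainW_eval_z (j := 0) (by omega) (by simp [hφb])
        have : w.eval φb = φb m := by
          rw [UWord.eval_congr hwF φb, hFl]; rfl
        rw [hholds φb, this] at hLz
        simp only [hφb, if_neg (by omega : m ≠ 0)] at hLz
        exact PSem.noConfusion hLz
  | cons h1 t1 =>
      -- w ≃ w' · F with w' = lprod h1 t1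
      rw [List.cons_append] at hdl
      have hwF : AEq w ((lprod h1 t1).mul F) := by
        have := aeq_factors w h1 (t1 ++ [F]) hdl.symm
        rw [lprod_append] at this
        exact this
      set w' := lprod h1 t1 with hw'
      have heval : ∀ φ, (chainW m).eval φ = w'.eval φ * F.eval φ := by
        intro φ
        rw [hholds φ, UWord.eval_congr hwF φ]; rfl
      -- F = letter m
      have hFa : w'.eval φa * F.eval φa = PSem.a := by rw [← heval, hLa]
      obtain ⟨hwe, hFe⟩ := PSem.eq_of_mul_eq_a hFa
      have hFl : F = UWord.letter m := by
        rcases factors_shape w F hFmem with ⟨i, rfl⟩ | ⟨v, rfl⟩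
        · by_cases hi : i = m
          · rw [hi]
          · exfalso
            have h0 : UWord.eval φa (UWord.letter i) = PSem.e := hφa_ne i hi
            rw [h0] at hFe
            exact PSem.noConfusion hFe
        · exact absurd (show PSem.pinv (UWord.eval φa v) = PSem.a from hFe)
            (PSem.pinv_ne_a _)
      rw [hFl] at hwF
      -- every letter of w' is < m
      have hsub : ∀ j ∈ w'.letters, j < m := by
        intro j hj
        by_contra hc
        push_neg at hc
        set φj : ℕ → PSem := fun i => if i = j then PSem.a else PSem.e with hφj
        have hwne : w'.eval φj ≠ PSem.e :=
          UWord.eval_ne_e hj (by simp [hφj])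
        have hRz : w'.eval φj * F.eval φj = PSem.z := PSem.mul_ne_e_z _ hwne
        have hLR := heval φj
        rw [hRz] at hLR
        rcases Nat.lt_or_ge m j with hlt | hge
        · -- j > m : LHS = e
          have : (chainW m).eval φj = PSem.e :=
            chainW_eval_e (fun i hi => by simp [hφj, show i ≠ j by omega])
          rw [this] at hLR
          exact PSem.noConfusion hLR
        · -- j = m : LHS = a
          have hjm : j = m := by omega
          have : (chainW m).eval φj = PSem.a :=
            chainW_eval_last_a (fun i hi => by simp [hφj, show i ≠ j by omega])
              (by simp [hφj, hjm])
          rw [this] at hLR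
          exact PSem.noConfusion hLR
      -- every i < m is a letter of w'
      have hsup : ∀ i < m, i ∈ w'.letters := by
        intro i him
        by_contra hni
        set φi : ℕ → PSem := fun x => if x = i then PSem.a else PSem.e with hφi
        have hLz : (chainW m).eval φi = PSem.z :=
          chainW_eval_z (j := i) him (by simp [hφi])
        have hwe' : w'.eval φi = PSem.e :=
          UWord.eval_e (fun j hj => by
            have : j ≠ i := fun hc => hni (hc ▸ hj)
            simp [hφi, this])
        have hFe' : (UWord.letter m).eval φi = PSem.e := by
          show φi m = PSem.e
          simp [hφi, show m ≠ i by omega]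
        have := heval φi
        rw [hFl] at this
        rw [hLz, hwe', hFe'] at this
        exact PSem.noConfusion this
      -- n > 1 since w' has a letter
      obtain ⟨j, hj⟩ := UWord.letters_nonempty w'
      have hjm := hsub j hj
      refine ⟨by omega, w', hwF, ?_⟩
      ext i
      exact ⟨fun h => hsub i h, fun h => hsup i h⟩
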